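/- For Re(z) > 0, Y_n^\mu(1/z) = (2z)^{n+\mu+1} U(n+\mu+1, 2n+\mu+2, 2z), where U is the Tricomi confluent hypergeometric function given by U(a,c,w) = (1/\Gamma(a)) \int_0^\infty t^{a-1} (1+t)^{c-a-1} e^{-wt} dt for Re(a), Re(w) > 0. -/

import Mathlib

open Finset

/-- Generalized Bessel polynomial `Y_n^μ(z)`. -/
noncomputable def genBessel (n : ℕ) (μ z : ℂ) : ℂ :=
  ∑ k ∈ Finset.range (n + 1),
    (n.choose k : ℂ) * (ascPochhammer ℂ k).eval ((n : ℂ) + μ + 1) * (z / 2) ^ k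

/-- Tricomi confluent hypergeometric function `U(a,c,w)`, defined by its
integral representation, valid for `Re a > 0`, `Re w > 0`. -/
noncomputable def tricomiU (a c w : ℂ) : ℂ :=
  (1 / Complex.Gamma a) *
    ∫ t in Set.Ioi (0 : ℝ),
      (t : ℂ) ^ (a - 1) * ((1 : ℂ) + t) ^ (c - a - 1) * Complex.exp (-w * t)

open Finset MeasureTheory Set Complex Filter Metric


lemma aux_int_real {s : ℝ} (hs : -1 < s) {b : ℝ} (hb : 0 < b) :
    IntegrableOn (fun t : ℝ => t ^ s * Real.exp (-b * t)) (Set.Ioi 0) := by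
  have := integrableOn_rpow_mul_exp_neg_mul_rpow hs zero_lt_one hb
  simpa [Real.rpow_one] using this

lemma aux_norm {a w : ℂ} {t : ℝ} (ht : 0 < t) :
    ‖(t : ℂ) ^ (a - 1) * Complex.exp (-w * t)‖ = t ^ (a.re - 1) * Real.exp (-w.re * t) := by
  rw [norm_mul,
    Complex.norm_cpow_eq_rpow_re_of_pos ht, Complex.norm_exp]
  have h1 : (a - 1).re = a.re - 1 := by simp
  have h2 : (-w * (t : ℂ)).re = -w.re * t := by simp [Complex.mul_re]
  rw [h1, h2]

lemma aux_cont {a w : ℂ} :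
    ContinuousOn (fun t : ℝ => (t : ℂ) ^ (a - 1) * Complex.exp (-w * t)) (Set.Ioi 0) := by
  apply ContinuousOn.mul
  · intro t ht
    exact (Complex.continuousAt_ofReal_cpow_const t _ (Or.inr (by exact_mod_cast ne_of_gt ht))).continuousWithinAt
  · exact (Complex.continuous_exp.comp (by continuity)).continuousOn

lemma aux_integrable {a w : ℂ} (ha : 0 < a.re) (hw : 0 < w.re) :
    IntegrableOn (fun t : ℝ => (t : ℂ) ^ (a - 1) * Complex.exp (-w * t)) (Set.Ioi 0) := by
  refine Integrable.mono' (aux_int_real (s := a.re - 1) (by linarith) hw)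
    (aux_cont.aestronglyMeasurable measurableSet_Ioi) ?_
  filter_upwards [ae_restrict_mem measurableSet_Ioi] with t ht
  rw [aux_norm ht]

set_option maxHeartbeats 1000000 in
lemma aux_hasDerivAt {a : ℂ} (ha : 0 < a.re) {w₀ : ℂ} (hw₀ : 0 < w₀.re) :
    DifferentiableAt ℂ
      (fun w : ℂ => ∫ t : ℝ in Ioi (0:ℝ), (t : ℂ) ^ (a - 1) * Complex.exp (-w * t)) w₀ := by
  set F : ℂ → ℝ → ℂ := fun w t => (t : ℂ) ^ (a - 1) * Complex.exp (-w * t) with hF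
  set F' : ℂ → ℝ → ℂ := fun w t => (t : ℂ) ^ (a - 1) * (Complex.exp (-w * t) * (-(t:ℂ))) with hF'
  set ε : ℝ := w₀.re / 2 with hε
  have hεpos : 0 < ε := by positivity
  have key := hasDerivAt_integral_of_dominated_loc_of_deriv_le (F := F) (F' := F')
    (μ := volume.restrict (Ioi (0:ℝ))) (x₀ := w₀)
    (bound := fun t => t ^ a.re * Real.exp (-ε * t)) (ball_mem_nhds w₀ hεpos) ?_ ?_ ?_ ?_ ?_ ?_
  · exact key.2.differentiableAt
  · filter_upwards with w
    exact (aux_cont (a := a) (w := w)).aestronglyMeasurable measurableSet_Ioi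
  · exact aux_integrable ha hw₀
  · have m1 := (aux_cont (a := a) (w := w₀)).aestronglyMeasurable (μ := volume) measurableSet_Ioi
    have m2 : AEStronglyMeasurable (fun t : ℝ => -(t : ℂ))
        (volume.restrict (Ioi (0:ℝ))) :=
      (Complex.continuous_ofReal.neg).aestronglyMeasurable
    exact (m1.mul m2).congr (Filter.Eventually.of_forall fun t => (mul_assoc _ _ _))
  · filter_upwards [ae_restrict_mem measurableSet_Ioi] with t ht w hw
    have ht' : (0:ℝ) < t := ht
    have hwre : ε ≤ w.re := by
      have h1 : |w.re - w₀.re| ≤ dist w w₀ := by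
        rw [Complex.dist_eq]
        simpa using Complex.abs_re_le_norm (w - w₀)
      have h2 : |w.re - w₀.re| < ε := lt_of_le_of_lt h1 (mem_ball.mp hw)
      have h3 := abs_lt.mp h2
      simp only [hε] at *
      linarith [h3.1]
    have hnorm : ‖F' w t‖ = t ^ (a.re - 1) * (Real.exp (-w.re * t) * t) := by
      simp only [F', norm_mul, norm_neg, Complex.norm_exp,
        Complex.norm_real, Real.norm_eq_abs, Complex.norm_cpow_eq_rpow_re_of_pos ht']
      have h1 : (a - 1).re = a.re - 1 := by simp
      have h2 : (-w * (t : ℂ)).re = -w.re * t := by simp [Complex.mul_re]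
      rw [h1, h2, abs_of_pos ht']
    rw [hnorm]
    have h3 : t ^ (a.re - 1) * (Real.exp (-w.re * t) * t) = t ^ a.re * Real.exp (-w.re * t) := by
      rw [show t ^ a.re = t ^ (a.re - 1 + 1) by ring_nf, Real.rpow_add ht', Real.rpow_one]
      ring
    rw [h3]
    have h4 : Real.exp (-w.re * t) ≤ Real.exp (-ε * t) :=
      Real.exp_le_exp.mpr (by nlinarith)
    exact mul_le_mul_of_nonneg_left h4 (Real.rpow_nonneg ht'.le _)
  · exact aux_int_real (by linarith) hεpos
  · filter_upwards [ae_restrict_mem measurableSet_Ioi] with t ht w hw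
    have hd : HasDerivAt (fun w : ℂ => Complex.exp (-w * t)) (Complex.exp (-w * t) * (-(t:ℂ))) w := by
      simpa using ((hasDerivAt_id w).neg.mul_const (t:ℂ)).cexp
    exact hd.const_mul ((t:ℂ) ^ (a - 1))


lemma aux_Gamma_add_nat {a : ℂ} (ha : 0 < a.re) (k : ℕ) :
    Complex.Gamma (a + k) = (ascPochhammer ℂ k).eval a * Complex.Gamma a := by
  induction k with
  | zero => simp
  | succ k ih =>
    have hne : a + k ≠ 0 := by
      intro h
      have := congrArg Complex.re h
      simp only [Complex.add_re, Complex.natCast_re, Complex.zero_re] at this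
      have : (0:ℝ) ≤ (k:ℝ) := Nat.cast_nonneg k
      linarith
    have h1 : a + ((k : ℂ) + 1) = (a + k) + 1 := by ring
    rw [Nat.cast_succ, h1, Complex.Gamma_add_one _ hne, ih, ascPochhammer_succ_right]
    simp [Polynomial.eval_mul]
    ring

lemma aux_key {a : ℂ} (ha : 0 < a.re) {w : ℂ} (hw : 0 < w.re) :
    (∫ t : ℝ in Ioi (0:ℝ), (t : ℂ) ^ (a - 1) * Complex.exp (-w * t)) =
      w ^ (-a) * Complex.Gamma a := by
  set U : Set ℂ := {w : ℂ | 0 < w.re} with hU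
  set f : ℂ → ℂ := fun w => ∫ t : ℝ in Ioi (0:ℝ), (t : ℂ) ^ (a - 1) * Complex.exp (-w * t)
  set g : ℂ → ℂ := fun w => w ^ (-a) * Complex.Gamma a
  have hUo : IsOpen U := isOpen_lt continuous_const Complex.continuous_re
  have hfa : AnalyticOnNhd ℂ f U :=
    DifferentiableOn.analyticOnNhd
      (fun w hw => (aux_hasDerivAt ha hw).differentiableWithinAt) hUo
  have hga : AnalyticOnNhd ℂ g U := by
    refine DifferentiableOn.analyticOnNhd (fun w hw => ?_) hUo
    have h1 : DifferentiableAt ℂ (fun w : ℂ => w ^ (-a)) w :=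
      ((hasDerivAt_id w).cpow_const (Or.inl hw)).differentiableAt
    exact (h1.mul_const _).differentiableWithinAt
  have hreal : ∀ r : ℝ, 0 < r → f r = g r := by
    intro r hr
    have h1 := Complex.integral_cpow_mul_exp_neg_mul_Ioi ha hr
    have h2 : f r = ∫ t : ℝ in Ioi (0:ℝ), (t : ℂ) ^ (a - 1) * Complex.exp (-((r:ℂ) * t)) := by
      simp only [f, neg_mul]
    rw [h2, h1]
    have h3 : ((r:ℂ)).arg ≠ Real.pi := by
      rw [Complex.arg_ofReal_of_nonneg hr.le]
      exact Real.pi_ne_zero.symm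
    simp only [g]
    rw [one_div, Complex.inv_cpow _ _ h3, ← Complex.cpow_neg]
  have hpre : IsPreconnected U := (convex_halfSpace_re_gt 0).isPreconnected
  have h1U : (1:ℂ) ∈ U := by simp [hU]
  have hfreq : ∃ᶠ z in nhdsWithin (1:ℂ) {(1:ℂ)}ᶜ, f z = g z := by
    have htend : Tendsto (fun n : ℕ => ((1 + ((n:ℝ)+1)⁻¹ : ℝ) : ℂ)) atTop
        (nhdsWithin (1:ℂ) {(1:ℂ)}ᶜ) := by
      rw [tendsto_nhdsWithin_iff]
      constructor
      · have : Tendsto (fun n : ℕ => (1 + ((n:ℝ)+1)⁻¹ : ℝ)) atTop (nhds 1) := by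
          have := tendsto_one_div_add_atTop_nhds_zero_nat (𝕜 := ℝ)
          simpa [one_div] using (tendsto_const_nhds (x := (1:ℝ))).add this
        have h2 := (Complex.continuous_ofReal.tendsto 1).comp this
        simpa [Function.comp_def] using h2
      · filter_upwards with n
        simp only [Set.mem_compl_iff, Set.mem_singleton_iff]
        intro h
        have hre : (1 + ((n:ℝ)+1)⁻¹) = 1 := by exact_mod_cast h
        have hpos : (0:ℝ) < ((n:ℝ)+1)⁻¹ := by positivity
        linarith
    refine htend.frequently (Filter.Frequently.of_forall fun n => ?_)
    exact hreal _ (by positivity)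
  exact hfa.eqOn_of_preconnected_of_frequently_eq hga hpre h1U hfreq hw

theorem genBessel_eq_tricomiU (n : ℕ) (μ z : ℂ) (hμ : -1 < μ.re) (hz : 0 < z.re) :
    genBessel n μ (1 / z) =
      (2 * z) ^ ((n : ℂ) + μ + 1) *
        tricomiU ((n : ℂ) + μ + 1) (2 * n + μ + 2) (2 * z) := by
  set a : ℂ := (n : ℂ) + μ + 1 with ha_def
  have ha : 0 < a.re := by
    rw [ha_def]
    simp only [Complex.add_re, Complex.natCast_re, Complex.one_re]
    have h0 : (0:ℝ) ≤ n := Nat.cast_nonneg n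
    linarith
  have hw : 0 < (2 * z).re := by
    have : (2 * z).re = 2 * z.re := by simp [Complex.mul_re]
    rw [this]; linarith
  have hzne : z ≠ 0 := by
    intro h; rw [h] at hz; simp at hz
  have h2z : (2 : ℂ) * z ≠ 0 := mul_ne_zero two_ne_zero hzne
  have hΓ : Complex.Gamma a ≠ 0 := Complex.Gamma_ne_zero_of_re_pos ha
  have hca : (2 * (n:ℂ) + μ + 2) - a - 1 = (n : ℂ) := by rw [ha_def]; ring
  unfold tricomiU
  have hint : ∀ t ∈ Ioi (0:ℝ),
      (t : ℂ) ^ (a - 1) * ((1 : ℂ) + t) ^ ((2 * (n:ℂ) + μ + 2) - a - 1) *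
          Complex.exp (-(2*z) * t)
      = ∑ k ∈ Finset.range (n+1),
          (n.choose k : ℂ) * ((t : ℂ) ^ (a + k - 1) * Complex.exp (-(2*z) * t)) := by
    intro t ht
    have ht' : (0:ℝ) < t := ht
    have htne : (t : ℂ) ≠ 0 := by
      simpa using ht'.ne'
    rw [hca, Complex.cpow_natCast]
    have hbin : ((1:ℂ) + t) ^ n
        = ∑ k ∈ Finset.range (n+1), (t:ℂ)^k * (n.choose k : ℂ) := by
      rw [add_comm ((1:ℂ)) ((t:ℂ)), add_pow]
      simp
    rw [hbin, Finset.mul_sum, Finset.sum_mul]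
    refine Finset.sum_congr rfl fun k hk => ?_
    have hpow : (t:ℂ)^(a-1) * (t:ℂ)^k = (t:ℂ)^(a + k - 1) := by
      rw [← Complex.cpow_natCast (t:ℂ) k, ← Complex.cpow_add _ _ htne]
      ring_nf
    rw [← hpow]; ring
  rw [MeasureTheory.setIntegral_congr_fun measurableSet_Ioi hint]
  have hInt : ∀ k ∈ Finset.range (n+1), MeasureTheory.IntegrableOn
      (fun t : ℝ => (n.choose k : ℂ) * ((t : ℂ) ^ (a + k - 1) * Complex.exp (-(2*z) * t)))
      (Ioi (0:ℝ)) := by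
    intro k _
    have hak : 0 < (a + (k:ℂ)).re := by
      simp only [Complex.add_re, Complex.natCast_re]
      have h0 : (0:ℝ) ≤ k := Nat.cast_nonneg k
      linarith
    exact (aux_integrable hak hw).const_mul _
  rw [MeasureTheory.integral_finset_sum _ hInt]
  have hval : ∀ k ∈ Finset.range (n+1),
      (∫ t : ℝ in Ioi (0:ℝ),
        (n.choose k : ℂ) * ((t : ℂ) ^ (a + k - 1) * Complex.exp (-(2*z) * t)))
      = (n.choose k : ℂ) * ((2*z) ^ (-(a + (k:ℂ))) *
          ((ascPochhammer ℂ k).eval a * Complex.Gamma a)) := by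
    intro k _
    have hak : 0 < (a + (k:ℂ)).re := by
      simp only [Complex.add_re, Complex.natCast_re]
      have h0 : (0:ℝ) ≤ k := Nat.cast_nonneg k
      linarith
    rw [integral_const_mul, aux_key hak hw, ← aux_Gamma_add_nat ha k]
  rw [Finset.sum_congr rfl hval]
  unfold genBessel
  rw [← ha_def, Finset.mul_sum, Finset.mul_sum]
  refine Finset.sum_congr rfl fun k _ => ?_
  have e1 : (2*z) ^ (-(a + (k:ℂ))) = ((2*z) ^ a)⁻¹ * (((2*z) ^ k : ℂ))⁻¹ := by
    rw [neg_add, Complex.cpow_add _ _ h2z, Complex.cpow_neg, Complex.cpow_neg,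
      Complex.cpow_natCast]
  have e2 : ((2*z) ^ a : ℂ) ≠ 0 := by
    simp [Complex.cpow_eq_zero_iff, h2z]
  have e3 : ((1/z/2 : ℂ)) ^ k = (((2*z) ^ k : ℂ))⁻¹ := by
    rw [← inv_pow]
    congr 1
    rw [div_div, one_div, mul_comm]
  have e4 : ((2*z : ℂ)) ^ k ≠ 0 := pow_ne_zero _ h2z
  rw [e1, e3]
  field_simp
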